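/- For every nonnegative integer n, there exist integers x, y, z such that n = 3x² + y(3y+1) + z(3z+2). -/

import Mathlib

namespace Stmt17
set_option maxHeartbeats 2000000

def q2 (A B C x y : ℤ) : ℤ := A*x^2 + 2*(B*x*y) + C*y^2

def bil2 (A B C u₀ u₁ v₀ v₁ : ℤ) : ℤ := A*u₀*v₀ + B*(u₀*v₁ + u₁*v₀) + C*u₁*v₁

def q3 (a b c p q r x y z : ℤ) : ℤ :=
  a*x^2 + b*y^2 + c*z^2 + 2*(p*x*y + q*x*z + r*y*z)

def bil3 (a b c p q r u₀ u₁ u₂ v₀ v₁ v₂ : ℤ) : ℤ :=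
  a*u₀*v₀ + b*u₁*v₁ + c*u₂*v₂ + p*(u₀*v₁+u₁*v₀) + q*(u₀*v₂+u₂*v₀) + r*(u₁*v₂+u₂*v₁)

def det3 (a b c p q r : ℤ) : ℤ := a*b*c + 2*(p*q*r) - a*r^2 - b*q^2 - c*p^2

lemma near (a t : ℤ) (ha : 0 < a) : ∃ x : ℤ, 4*(t - a*x)^2 ≤ a^2 := by
  rcases le_or_gt (2*(t % a)) a with h | h
  · refine ⟨t / a, ?_⟩
    have h1 : 0 ≤ t % a := Int.emod_nonneg t ha.ne'
    have h2 := Int.emod_def t a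
    nlinarith [h2]
  · refine ⟨t / a + 1, ?_⟩
    have h1 : t % a < a := Int.emod_lt_of_pos t ha
    have h2 := Int.emod_def t a
    nlinarith [h2]

lemma min2 (f : ℤ → ℤ → ℤ) (hpos : ∀ x y, ¬(x = 0 ∧ y = 0) → 0 < f x y) :
    ∃ α : ℤ, (∃ x y, ¬(x = 0 ∧ y = 0) ∧ f x y = α) ∧
      ∀ x y, ¬(x = 0 ∧ y = 0) → α ≤ f x y := by
  classical
  let P : ℕ → Prop := fun k => ∃ x y, ¬(x = 0 ∧ y = 0) ∧ f x y = (k : ℤ)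
  have hP : ∃ k : ℕ, P k := by
    refine ⟨(f 1 0).toNat, 1, 0, by simp, ?_⟩
    have := hpos 1 0 (by simp)
    omega
  haveI : DecidablePred P := Classical.decPred P
  refine ⟨(Nat.find hP : ℤ), Nat.find_spec hP, ?_⟩
  intro x y hxy
  have h0 : 0 < f x y := hpos x y hxy
  have hm : P (f x y).toNat := ⟨x, y, hxy, by omega⟩
  have := Nat.find_le (h := hP) hm
  omega

lemma min3 (f : ℤ → ℤ → ℤ → ℤ) (hpos : ∀ x y z, ¬(x = 0 ∧ y = 0 ∧ z = 0) → 0 < f x y z) :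
    ∃ α : ℤ, (∃ x y z, ¬(x = 0 ∧ y = 0 ∧ z = 0) ∧ f x y z = α) ∧
      ∀ x y z, ¬(x = 0 ∧ y = 0 ∧ z = 0) → α ≤ f x y z := by
  classical
  let P : ℕ → Prop := fun k => ∃ x y z, ¬(x = 0 ∧ y = 0 ∧ z = 0) ∧ f x y z = (k : ℤ)
  have hP : ∃ k : ℕ, P k := by
    refine ⟨(f 1 0 0).toNat, 1, 0, 0, by simp, ?_⟩
    have := hpos 1 0 0 (by simp)
    omega
  haveI : DecidablePred P := Classical.decPred P
  refine ⟨(Nat.find hP : ℤ), Nat.find_spec hP, ?_⟩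
  intro x y z hxy
  have h0 : 0 < f x y z := hpos x y z hxy
  have hm : P (f x y z).toNat := ⟨x, y, z, hxy, by omega⟩
  have := Nat.find_le (h := hP) hm
  omega

lemma q2_subst (A B C e f g h u v : ℤ) :
    q2 (q2 A B C e g) (bil2 A B C e g f h) (q2 A B C f h) u v
      = q2 A B C (e*u + f*v) (g*u + h*v) := by
  simp only [q2, bil2]; ring

lemma q2_subst_det (A B C e f g h : ℤ) :
    (q2 A B C e g) * (q2 A B C f h) - (bil2 A B C e g f h)^2
      = (e*h - f*g)^2 * (A*C - B^2) := by
  simp only [q2, bil2]; ring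

lemma q3_subst (a b c p q r : ℤ) (P₀₀ P₀₁ P₀₂ P₁₀ P₁₁ P₁₂ P₂₀ P₂₁ P₂₂ x y z : ℤ) :
    q3 (q3 a b c p q r P₀₀ P₁₀ P₂₀) (q3 a b c p q r P₀₁ P₁₁ P₂₁) (q3 a b c p q r P₀₂ P₁₂ P₂₂)
       (bil3 a b c p q r P₀₀ P₁₀ P₂₀ P₀₁ P₁₁ P₂₁)
       (bil3 a b c p q r P₀₀ P₁₀ P₂₀ P₀₂ P₁₂ P₂₂)
       (bil3 a b c p q r P₀₁ P₁₁ P₂₁ P₀₂ P₁₂ P₂₂) x y z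
      = q3 a b c p q r (P₀₀*x + P₀₁*y + P₀₂*z) (P₁₀*x + P₁₁*y + P₁₂*z) (P₂₀*x + P₂₁*y + P₂₂*z) := by
  simp only [q3, bil3]; ring

lemma q3_subst_det (a b c p q r : ℤ) (P₀₀ P₀₁ P₀₂ P₁₀ P₁₁ P₁₂ P₂₀ P₂₁ P₂₂ : ℤ) :
    det3 (q3 a b c p q r P₀₀ P₁₀ P₂₀) (q3 a b c p q r P₀₁ P₁₁ P₂₁) (q3 a b c p q r P₀₂ P₁₂ P₂₂)
       (bil3 a b c p q r P₀₀ P₁₀ P₂₀ P₀₁ P₁₁ P₂₁)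
       (bil3 a b c p q r P₀₀ P₁₀ P₂₀ P₀₂ P₁₂ P₂₂)
       (bil3 a b c p q r P₀₁ P₁₁ P₂₁ P₀₂ P₁₂ P₂₂)
      = (P₀₀*(P₁₁*P₂₂ - P₁₂*P₂₁) - P₀₁*(P₁₀*P₂₂ - P₁₂*P₂₀) + P₀₂*(P₁₀*P₂₁ - P₁₁*P₂₀))^2
        * det3 a b c p q r := by
  simp only [q3, bil3, det3]; ring

lemma q3_split (a b c p q r x y z : ℤ) :
    a * q3 a b c p q r x y z
      = (a*x + p*y + q*z)^2 + q2 (a*b - p^2) (a*r - p*q) (a*c - q^2) y z := by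
  simp only [q3, q2]; ring

lemma det2_of_split (a b c p q r : ℤ) :
    (a*b - p^2) * (a*c - q^2) - (a*r - p*q)^2 = a * det3 a b c p q r := by
  simp only [det3]; ring


lemma binary_reduce (A B C α x₀ y₀ : ℤ) (hx0 : ¬(x₀ = 0 ∧ y₀ = 0))
    (hval : q2 A B C x₀ y₀ = α)
    (hmin : ∀ x y, ¬(x = 0 ∧ y = 0) → α ≤ q2 A B C x y)
    (hpos : ∀ x y, ¬(x = 0 ∧ y = 0) → 0 < q2 A B C x y) :
    ∃ B₂ C₂ e f g h : ℤ, e*h - f*g = 1 ∧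
      (∀ u v, q2 A B C (e*u + f*v) (g*u + h*v) = q2 α B₂ C₂ u v) ∧
      4*B₂^2 ≤ α^2 ∧ α ≤ C₂ ∧ α*C₂ - B₂^2 = A*C - B^2 ∧ 0 < α := by
  have hαpos : 0 < α := hval ▸ hpos x₀ y₀ hx0
  -- primitivity of (x₀, y₀)
  set g0 : ℕ := Int.gcd x₀ y₀ with hg0def
  obtain ⟨x₁, hx1⟩ : ((g0 : ℤ)) ∣ x₀ := Int.gcd_dvd_left x₀ y₀
  obtain ⟨y₁, hy1⟩ : ((g0 : ℤ)) ∣ y₀ := Int.gcd_dvd_right x₀ y₀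
  have hg0ne : g0 ≠ 0 := by
    intro h
    exact hx0 (Int.gcd_eq_zero_iff.mp (hg0def ▸ h))
  have h1 : ¬(x₁ = 0 ∧ y₁ = 0) := by
    rintro ⟨rfl, rfl⟩
    exact hx0 ⟨by simpa using hx1, by simpa using hy1⟩
  have hscale : α = (g0:ℤ)^2 * q2 A B C x₁ y₁ := by
    rw [← hval, hx1, hy1]; simp only [q2]; ring
  have hβ : α ≤ q2 A B C x₁ y₁ := hmin x₁ y₁ h1
  have hβpos : 0 < q2 A B C x₁ y₁ := hpos x₁ y₁ h1
  have hg1 : (g0:ℤ) = 1 := by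
    have h0 : (1:ℤ) ≤ (g0:ℤ) := by exact_mod_cast Nat.one_le_iff_ne_zero.mpr hg0ne
    rcases h0.lt_or_eq with h2 | h2
    · exfalso
      nlinarith [mul_pos (mul_pos (show (0:ℤ) < (g0:ℤ)+1 by linarith)
          (show (0:ℤ) < (g0:ℤ)-1 by linarith)) hβpos]
    · omega
  have hgcd : Int.gcd x₀ y₀ = 1 := by exact_mod_cast hg1
  -- Bezout
  have hb := Int.gcd_eq_gcd_ab x₀ y₀
  rw [hgcd] at hb
  set w₀ : ℤ := -(Int.gcdB x₀ y₀) with hw₀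
  set w₁ : ℤ := Int.gcdA x₀ y₀ with hw₁
  have hdet : x₀*w₁ - w₀*y₀ = 1 := by rw [hw₀, hw₁]; push_cast at hb; linarith [hb]
  set B' : ℤ := bil2 A B C x₀ y₀ w₀ w₁ with hB'
  obtain ⟨k, hk⟩ := near α B' hαpos
  set f' : ℤ := w₀ - k*x₀ with hf'
  set h' : ℤ := w₁ - k*y₀ with hh'
  have hdet2 : x₀*h' - f'*y₀ = 1 := by rw [hf', hh']; linear_combination hdet
  set B₂ : ℤ := bil2 A B C x₀ y₀ f' h' with hB₂
  set C₂ : ℤ := q2 A B C f' h' with hC₂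
  have hB2eq : B₂ = B' - α*k := by
    rw [hB₂, hB', ← hval, hf', hh']; simp only [bil2, q2]; ring
  refine ⟨B₂, C₂, x₀, f', y₀, h', hdet2, ?_, ?_, ?_, ?_, hαpos⟩
  · intro u v
    rw [← hval, hB₂, hC₂, q2_subst]
  · rw [hB2eq]; nlinarith [hk]
  · apply hmin
    rintro ⟨hf0, hh0⟩
    rw [hf0, hh0] at hdet2; simp at hdet2
  · have := q2_subst_det A B C x₀ f' y₀ h'
    rw [hval, hdet2] at this
    linear_combination this

lemma binary_sum_sq (A B C : ℤ)
    (hpos : ∀ x y, ¬(x = 0 ∧ y = 0) → 0 < q2 A B C x y)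
    (hdet : A*C - B^2 = 1) :
    ∃ e f g h : ℤ, e*h - f*g = 1 ∧ ∀ u v, q2 A B C (e*u + f*v) (g*u + h*v) = u^2 + v^2 := by
  obtain ⟨α, ⟨x₀, y₀, hx0, hval⟩, hmin⟩ := min2 (q2 A B C) hpos
  obtain ⟨B₂, C₂, e, f, g, h, hdet2, hvals, hB2, hC2, hdetp, hαpos⟩ :=
    binary_reduce A B C α x₀ y₀ hx0 hval hmin hpos
  rw [hdet] at hdetp
  have hα1 : α = 1 := by
    have h6 : 6*α ≤ 7 := by nlinarith [sq_nonneg (α - 1)]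
    omega
  subst hα1
  have hB20 : B₂ = 0 := by
    have ht : B₂^2 ≤ 0 := by nlinarith [sq_nonneg B₂]
    have := sq_nonneg B₂
    have : B₂^2 = 0 := le_antisymm ht this
    exact pow_eq_zero_iff (by norm_num) |>.mp this
  have hC21 : C₂ = 1 := by rw [hB20] at hdetp; linarith
  refine ⟨e, f, g, h, hdet2, fun u v => ?_⟩
  rw [hvals u v, hB20, hC21]; simp only [q2]; ring


lemma completion3 (v₀ v₁ v₂ : ℤ) (h : Int.gcd ((Int.gcd v₀ v₁ : ℕ) : ℤ) v₂ = 1) :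
    ∃ P₀₁ P₀₂ P₁₁ P₁₂ P₂₁ P₂₂ : ℤ,
      v₀*(P₁₁*P₂₂ - P₁₂*P₂₁) - P₀₁*(v₁*P₂₂ - P₁₂*v₂) + P₀₂*(v₁*P₂₁ - P₁₁*v₂) = 1 := by
  by_cases hd : Int.gcd v₀ v₁ = 0
  · obtain ⟨hv0, hv1⟩ := Int.gcd_eq_zero_iff.mp hd
    rw [hd] at h
    simp only [Nat.cast_zero] at h
    have h2 : v₂ = 1 ∨ v₂ = -1 := by
      have : v₂.natAbs = 1 := by simpa [Int.gcd] using h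
      rcases Int.natAbs_eq v₂ with h' | h' <;> omega
    refine ⟨1, 0, 0, v₂, 0, 0, ?_⟩
    rw [hv0, hv1]
    rcases h2 with h' | h' <;> rw [h'] <;> ring
  · set D : ℤ := ((Int.gcd v₀ v₁ : ℕ) : ℤ) with hD
    have hDne : D ≠ 0 := by
      simp only [hD, ne_eq, Nat.cast_eq_zero]
      exact hd
    obtain ⟨a₁, ha₁⟩ : D ∣ v₀ := Int.gcd_dvd_left v₀ v₁
    obtain ⟨a₂, ha₂⟩ : D ∣ v₁ := Int.gcd_dvd_right v₀ v₁
    have hb : D = v₀ * Int.gcdA v₀ v₁ + v₁ * Int.gcdB v₀ v₁ := Int.gcd_eq_gcd_ab v₀ v₁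
    have hb2 : (1:ℤ) = D * Int.gcdA D v₂ + v₂ * Int.gcdB D v₂ := by
      have := Int.gcd_eq_gcd_ab D v₂
      rw [h] at this
      simpa using this
    set α : ℤ := Int.gcdA v₀ v₁
    set β : ℤ := Int.gcdB v₀ v₁
    set γ : ℤ := Int.gcdA D v₂
    set δ : ℤ := Int.gcdB D v₂
    have habe : a₁*α + a₂*β = 1 := by
      have h2 : D * (a₁*α + a₂*β) = D * 1 := by
        rw [mul_one]
        calc D * (a₁*α + a₂*β) = (D*a₁)*α + (D*a₂)*β := by ring
        _ = v₀*α + v₁*β := by rw [← ha₁, ← ha₂]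
        _ = D := hb.symm
      exact mul_left_cancel₀ hDne h2
    refine ⟨-β, -(δ*a₁), α, -(δ*a₂), 0, γ, ?_⟩
    have key : v₀*(α*γ - (-(δ*a₂))*0) - (-β)*(v₁*γ - (-(δ*a₂))*v₂) + (-(δ*a₁))*(v₁*0 - α*v₂)
        = γ*(v₀*α + v₁*β) + (δ*v₂)*(a₁*α + a₂*β) - 2*δ*v₂*a₁*α + δ*a₁*α*v₂ + v₂*δ*a₁*α := by
      ring
    rw [key, ← hb, habe]
    linear_combination -hb2

lemma tern_rep (a b c p q r : ℤ) (hdet : det3 a b c p q r = 1)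
    (hpos : ∀ x y z, ¬(x = 0 ∧ y = 0 ∧ z = 0) → 0 < q3 a b c p q r x y z)
    (X Y Z : ℤ) :
    ∃ s t u : ℤ, q3 a b c p q r X Y Z = s^2 + t^2 + u^2 := by
  obtain ⟨α, ⟨m₀, m₁, m₂, hm0, hmval⟩, hmin⟩ := min3 (q3 a b c p q r) hpos
  have hαpos : 0 < α := hmval ▸ hpos m₀ m₁ m₂ hm0
  -- primitivity
  have hprim : Int.gcd ((Int.gcd m₀ m₁ : ℕ) : ℤ) m₂ = 1 := by
    set g0 : ℕ := Int.gcd ((Int.gcd m₀ m₁ : ℕ) : ℤ) m₂ with hg0def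
    have hd0 : ((g0:ℕ):ℤ) ∣ ((Int.gcd m₀ m₁ : ℕ) : ℤ) := Int.gcd_dvd_left _ m₂
    obtain ⟨x₁, hx1⟩ : ((g0:ℕ):ℤ) ∣ m₀ := hd0.trans (Int.gcd_dvd_left m₀ m₁)
    obtain ⟨y₁, hy1⟩ : ((g0:ℕ):ℤ) ∣ m₁ := hd0.trans (Int.gcd_dvd_right m₀ m₁)
    obtain ⟨z₁, hz1⟩ : ((g0:ℕ):ℤ) ∣ m₂ := Int.gcd_dvd_right _ m₂
    have hg0ne : g0 ≠ 0 := by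
      intro h
      rw [hg0def] at h
      obtain ⟨h1, h2⟩ := Int.gcd_eq_zero_iff.mp h
      obtain ⟨h3, h4⟩ := Int.gcd_eq_zero_iff.mp (by exact_mod_cast h1)
      exact hm0 ⟨h3, h4, h2⟩
    have h1 : ¬(x₁ = 0 ∧ y₁ = 0 ∧ z₁ = 0) := by
      rintro ⟨rfl, rfl, rfl⟩
      exact hm0 ⟨by simpa using hx1, by simpa using hy1, by simpa using hz1⟩
    have hscale : α = (g0:ℤ)^2 * q3 a b c p q r x₁ y₁ z₁ := by
      rw [← hmval, hx1, hy1, hz1]; simp only [q3]; ring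
    have hβ : α ≤ q3 a b c p q r x₁ y₁ z₁ := hmin x₁ y₁ z₁ h1
    have hβpos : 0 < q3 a b c p q r x₁ y₁ z₁ := hpos x₁ y₁ z₁ h1
    have h0 : (1:ℤ) ≤ (g0:ℤ) := by exact_mod_cast Nat.one_le_iff_ne_zero.mpr hg0ne
    rcases h0.lt_or_eq with h2 | h2
    · exfalso
      nlinarith [mul_pos (mul_pos (show (0:ℤ) < (g0:ℤ)+1 by linarith)
          (show (0:ℤ) < (g0:ℤ)-1 by linarith)) hβpos]
    · exact_mod_cast h2.symm
  obtain ⟨P₀₁, P₀₂, P₁₁, P₁₂, P₂₁, P₂₂, hdetP⟩ := completion3 m₀ m₁ m₂ hprim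
  -- conjugated form
  set a' : ℤ := q3 a b c p q r m₀ m₁ m₂ with ha'
  set b' : ℤ := q3 a b c p q r P₀₁ P₁₁ P₂₁ with hb'
  set c' : ℤ := q3 a b c p q r P₀₂ P₁₂ P₂₂ with hc'
  set p' : ℤ := bil3 a b c p q r m₀ m₁ m₂ P₀₁ P₁₁ P₂₁ with hp'
  set q' : ℤ := bil3 a b c p q r m₀ m₁ m₂ P₀₂ P₁₂ P₂₂ with hq'
  set r' : ℤ := bil3 a b c p q r P₀₁ P₁₁ P₂₁ P₀₂ P₁₂ P₂₂ with hr'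
  have hval' : ∀ x y z, q3 a' b' c' p' q' r' x y z
      = q3 a b c p q r (m₀*x + P₀₁*y + P₀₂*z) (m₁*x + P₁₁*y + P₁₂*z) (m₂*x + P₂₁*y + P₂₂*z) :=
    fun x y z => q3_subst a b c p q r m₀ P₀₁ P₀₂ m₁ P₁₁ P₁₂ m₂ P₂₁ P₂₂ x y z
  have hdet' : det3 a' b' c' p' q' r' = 1 := by
    have := q3_subst_det a b c p q r m₀ P₀₁ P₀₂ m₁ P₁₁ P₁₂ m₂ P₂₁ P₂₂
    rw [ha', hb', hc', hp', hq', hr', this, hdet, hdetP]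
    ring
  have hinj : ∀ x y z : ℤ, ¬(x = 0 ∧ y = 0 ∧ z = 0) →
      ¬(m₀*x + P₀₁*y + P₀₂*z = 0 ∧ m₁*x + P₁₁*y + P₁₂*z = 0 ∧ m₂*x + P₂₁*y + P₂₂*z = 0) := by
    intro x y z hxyz ⟨h1, h2, h3⟩
    apply hxyz
    refine ⟨?_, ?_, ?_⟩
    · linear_combination (P₁₁*P₂₂ - P₁₂*P₂₁)*h1 + (P₀₂*P₂₁ - P₀₁*P₂₂)*h2
        + (P₀₁*P₁₂ - P₀₂*P₁₁)*h3 - x*hdetP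
    · linear_combination (P₁₂*m₂ - m₁*P₂₂)*h1 + (m₀*P₂₂ - P₀₂*m₂)*h2
        + (P₀₂*m₁ - m₀*P₁₂)*h3 - y*hdetP
    · linear_combination (m₁*P₂₁ - P₁₁*m₂)*h1 + (P₀₁*m₂ - m₀*P₂₁)*h2
        + (m₀*P₁₁ - P₀₁*m₁)*h3 - z*hdetP
  have hmin' : ∀ x y z, ¬(x = 0 ∧ y = 0 ∧ z = 0) → α ≤ q3 a' b' c' p' q' r' x y z := by
    intro x y z hxyz
    rw [hval']
    exact hmin _ _ _ (hinj x y z hxyz)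
  have ha'α : a' = α := by
    have := hval' 1 0 0
    simp only [q3, mul_one, mul_zero, add_zero, one_pow, zero_pow, mul_zero] at this
    calc a' = q3 a' b' c' p' q' r' 1 0 0 := by simp only [q3]; ring
    _ = q3 a b c p q r (m₀*1 + P₀₁*0 + P₀₂*0) (m₁*1 + P₁₁*0 + P₁₂*0) (m₂*1 + P₂₁*0 + P₂₂*0) :=
        hval' 1 0 0
    _ = q3 a b c p q r m₀ m₁ m₂ := by norm_num
    _ = α := hmval
  -- the binary form
  set A : ℤ := a'*b' - p'^2 with hA
  set B : ℤ := a'*r' - p'*q' with hB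
  set C : ℤ := a'*c' - q'^2 with hC
  have hsplit : ∀ x y z : ℤ, a' * q3 a' b' c' p' q' r' x y z
      = (a'*x + p'*y + q'*z)^2 + q2 A B C y z := fun x y z => q3_split a' b' c' p' q' r' x y z
  have hNdet : A*C - B^2 = a' := by
    rw [hA, hB, hC, det2_of_split, hdet', mul_one]
  have ha'pos : 0 < a' := ha'α ▸ hαpos
  have hNpos : ∀ y z, ¬(y = 0 ∧ z = 0) → 0 < q2 A B C y z := by
    intro y z hyz
    obtain ⟨x', hx'⟩ := near a' (p'*y + q'*z) ha'pos
    have hv : ¬((-x') = 0 ∧ y = 0 ∧ z = 0) := by tauto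
    have h1 : α ≤ q3 a' b' c' p' q' r' (-x') y z := hmin' _ _ _ hv
    have h2 := hsplit (-x') y z
    have h3 : (a'*(-x') + p'*y + q'*z)^2 = (p'*y + q'*z - a'*x')^2 := by ring
    nlinarith [ha'α ▸ h1]
  obtain ⟨α₂, ⟨w₁, w₂, hw0, hwval⟩, hmin₂⟩ := min2 (q2 A B C) hNpos
  have hα₂pos : 0 < α₂ := hwval ▸ hNpos w₁ w₂ hw0
  obtain ⟨B₂, C₂, _, _, _, _, _, _, hB2, hC2, hdetp, _⟩ :=
    binary_reduce A B C α₂ w₁ w₂ hw0 hwval hmin₂ hNpos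
  rw [hNdet] at hdetp
  have hub : 3*α₂^2 ≤ 4*a' := by nlinarith
  -- lift the binary minimal vector
  have hlb : 3*a'^2 ≤ 4*α₂ := by
    obtain ⟨x', hx'⟩ := near a' (p'*w₁ + q'*w₂) ha'pos
    have hv : ¬((-x') = 0 ∧ w₁ = 0 ∧ w₂ = 0) := by tauto
    have h1 : α ≤ q3 a' b' c' p' q' r' (-x') w₁ w₂ := hmin' _ _ _ hv
    have h2 := hsplit (-x') w₁ w₂
    rw [hwval] at h2
    nlinarith [ha'α ▸ h1]
  have ha'1 : a' = 1 := by
    by_contra hne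
    have h2le : 2 ≤ a' := by omega
    have hc3 : 8 ≤ a'^3 := by nlinarith
    have h4 : 9*a'^4 ≤ 16*α₂^2 := by nlinarith
    have h5 : 27*a'^4 ≤ 64*a' := by nlinarith
    nlinarith
  -- now N has determinant 1
  rw [ha'1] at hNdet
  have hNdet1 : A*C - B^2 = 1 := hNdet
  obtain ⟨e, f, g, h, hdetS, hSid⟩ := binary_sum_sq A B C hNpos hNdet1
  -- pull the target vector back through P
  set u₀ : ℤ := (P₁₁*P₂₂ - P₁₂*P₂₁)*X + (P₀₂*P₂₁ - P₀₁*P₂₂)*Y + (P₀₁*P₁₂ - P₀₂*P₁₁)*Z with hu₀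
  set u₁ : ℤ := (P₁₂*m₂ - m₁*P₂₂)*X + (m₀*P₂₂ - P₀₂*m₂)*Y + (P₀₂*m₁ - m₀*P₁₂)*Z with hu₁
  set u₂ : ℤ := (m₁*P₂₁ - P₁₁*m₂)*X + (P₀₁*m₂ - m₀*P₂₁)*Y + (m₀*P₁₁ - P₀₁*m₁)*Z with hu₂
  have hP0 : m₀*u₀ + P₀₁*u₁ + P₀₂*u₂ = X := by
    rw [hu₀, hu₁, hu₂]; linear_combination X*hdetP
  have hP1 : m₁*u₀ + P₁₁*u₁ + P₁₂*u₂ = Y := by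
    rw [hu₀, hu₁, hu₂]; linear_combination Y*hdetP
  have hP2 : m₂*u₀ + P₂₁*u₁ + P₂₂*u₂ = Z := by
    rw [hu₀, hu₁, hu₂]; linear_combination Z*hdetP
  have hXYZ : q3 a b c p q r X Y Z = q3 a' b' c' p' q' r' u₀ u₁ u₂ := by
    rw [hval' u₀ u₁ u₂, hP0, hP1, hP2]
  -- split off the first square
  have hsp := hsplit u₀ u₁ u₂
  -- express the binary part as a sum of two squares
  set s₁ : ℤ := h*u₁ - f*u₂ with hs₁
  set s₂ : ℤ := -(g*u₁) + e*u₂ with hs₂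
  have hrec1 : e*s₁ + f*s₂ = u₁ := by rw [hs₁, hs₂]; linear_combination u₁*hdetS
  have hrec2 : g*s₁ + h*s₂ = u₂ := by rw [hs₁, hs₂]; linear_combination u₂*hdetS
  have hbin : q2 A B C u₁ u₂ = s₁^2 + s₂^2 := by
    rw [← hrec1, ← hrec2]
    exact hSid s₁ s₂
  refine ⟨a'*u₀ + p'*u₁ + q'*u₂, s₁, s₂, ?_⟩
  rw [hXYZ]
  rw [hbin] at hsp
  linear_combination hsp - (q3 a' b' c' p' q' r' u₀ u₁ u₂) * ha'1


lemma three_squares (m : ℕ) (hm : m % 12 = 5) : ∃ a b c : ℤ, (m:ℤ) = a^2 + b^2 + c^2 := by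
  have hm5 : 5 ≤ m := by omega
  have hm4 : m % 4 = 1 := by omega
  have hm2 : m % 2 = 1 := by omega
  have hco : Nat.Coprime (2*m-1) (4*m) := by
    have h2 : Nat.Coprime (2*m-1) 2 :=
      ((Nat.Prime.coprime_iff_not_dvd Nat.prime_two).mpr (by omega)).symm
    have h4 : Nat.Coprime (2*m-1) 4 := by
      have h := h2.pow_right 2
      norm_num at h
      exact h
    have hmm : Nat.Coprime (2*m-1) m := by
      have h1 : Nat.Coprime (m-1) m :=
        (Nat.coprime_self_sub_left (by omega : 1 ≤ m)).mpr (Nat.coprime_one_left m)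
      have h5 := (Nat.coprime_add_mul_left_left (m-1) m 1).mpr h1
      have heq : m - 1 + m * 1 = 2*m - 1 := by omega
      rwa [heq] at h5
    exact Nat.Coprime.mul_right h4 hmm
  haveI : NeZero (4*m) := ⟨by omega⟩
  have hunit : IsUnit ((2*m-1 : ℕ) : ZMod (4*m)) := (ZMod.isUnit_iff_coprime _ _).mpr hco
  obtain ⟨P, hPgt, hPprime, hPmod⟩ := Nat.forall_exists_prime_gt_and_eq_mod hunit (4*m)
  haveI : Fact P.Prime := ⟨hPprime⟩
  have hmod : P ≡ 2*m-1 [MOD 4*m] := (ZMod.natCast_eq_natCast_iff _ _ _).mp hPmod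
  have hP4 : P % 4 = 1 := by
    have h1 : P ≡ 2*m-1 [MOD 4] := Nat.ModEq.of_dvd ⟨m, rfl⟩ hmod
    unfold Nat.ModEq at h1
    omega
  have hPodd : P % 2 = 1 := by omega
  have hPm : P % m = (2*m-1) % m := Nat.ModEq.of_dvd ⟨4, by ring⟩ hmod
  have hm1m : (2*m-1) % m = m-1 := by
    rw [show 2*m-1 = (m-1) + 1*m by omega, Nat.add_mul_mod_self_right]
    exact Nat.mod_eq_of_lt (by omega)
  have hdvd : m ∣ P + 1 := by
    refine ⟨P/m + 1, ?_⟩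
    have h3 := Nat.div_add_mod P m
    rw [Nat.mul_add, Nat.mul_one]
    omega
  set e : ℕ := (P+1)/m with he'
  have he : m * e = P + 1 := Nat.mul_div_cancel' hdvd
  have hPbig : 4*m < P := hPgt
  have hPnotdvd : ¬ (P ∣ m) := fun hdv => by
    have := Nat.le_of_dvd (by omega) hdv; omega
  have hmne : ((m:ℕ) : ZMod P) ≠ 0 := by
    rw [Ne, ZMod.natCast_eq_zero_iff]
    exact hPnotdvd
  have hjac : legendreSym P (-(m:ℤ)) = 1 := by
    rw [jacobiSym.legendreSym.to_jacobiSym]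
    rw [show (-(m:ℤ)) = -1 * m by ring, jacobiSym.mul_left]
    have h1 : jacobiSym (-1) P = 1 := by
      rw [jacobiSym.at_neg_one (Nat.odd_iff.mpr hPodd), ZMod.χ₄_nat_one_mod_four hP4]
    have h2 : jacobiSym ((m:ℕ) : ℤ) P = 1 := by
      rw [jacobiSym.quadratic_reciprocity_one_mod_four hm4 (Nat.odd_iff.mpr hPodd)]
      have hdvdZ : ((m:ℕ):ℤ) ∣ (-1 : ℤ) - (P:ℤ) := by
        have h6 : ((m:ℕ):ℤ) ∣ ((P:ℤ) + 1) := by exact_mod_cast hdvd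
        have : (-1 : ℤ) - (P:ℤ) = -((P:ℤ)+1) := by ring
        rw [this]
        exact dvd_neg.mpr h6
      have h3 : ((P:ℤ)) % ((m:ℕ):ℤ) = (-1 : ℤ) % ((m:ℕ):ℤ) := Int.modEq_iff_dvd.mpr hdvdZ
      rw [jacobiSym.mod_left' h3]
      rw [jacobiSym.at_neg_one (Nat.odd_iff.mpr hm2), ZMod.χ₄_nat_one_mod_four hm4]
    rw [h1, h2, one_mul]
  have hsq : IsSquare ((-(m:ℤ) : ℤ) : ZMod P) := by
    refine (legendreSym.eq_one_iff P ?_).mp hjac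
    push_cast
    exact neg_ne_zero.mpr hmne
  obtain ⟨s, hs⟩ := hsq
  have hs' : -((m:ℕ) : ZMod P) = s * s := by push_cast at hs; exact hs
  set fz : ZMod P := s * ((m:ℕ) : ZMod P)⁻¹ with hfzdef
  have hkey : ((m:ℕ) : ZMod P) * fz^2 = -1 := by
    rw [hfzdef]
    calc ((m:ℕ):ZMod P) * (s * ((m:ℕ):ZMod P)⁻¹)^2
        = (s*s) * (((m:ℕ):ZMod P) * ((m:ℕ):ZMod P)⁻¹) * ((m:ℕ):ZMod P)⁻¹ := by ring
      _ = (s*s) * ((m:ℕ):ZMod P)⁻¹ := by rw [mul_inv_cancel₀ hmne, mul_one]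
      _ = -((m:ℕ):ZMod P) * ((m:ℕ):ZMod P)⁻¹ := by rw [← hs']
      _ = -(((m:ℕ):ZMod P) * ((m:ℕ):ZMod P)⁻¹) := by ring
      _ = -1 := by rw [mul_inv_cancel₀ hmne]
  set f : ℤ := (fz.val : ℤ) with hfdef
  have hfz : ((f:ℤ) : ZMod P) = fz := by
    rw [hfdef, Int.cast_natCast]
    exact ZMod.natCast_rightInverse fz
  have hkey2 : ((P:ℕ):ℤ) ∣ 1 + (m:ℤ)*f^2 := by
    have h7 : ((1 + (m:ℤ)*f^2 : ℤ) : ZMod P) = 0 := by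
      push_cast
      rw [hfz, hkey]
      ring
    exact (ZMod.intCast_zmod_eq_zero_iff_dvd _ _).mp h7
  set g : ℤ := (1 + (m:ℤ)*f^2)/((P:ℕ):ℤ) with hgdef
  have hPg : ((P:ℕ):ℤ)*g = 1 + (m:ℤ)*f^2 := Int.mul_ediv_cancel' hkey2
  have heZ : (m:ℤ)*(e:ℤ) = ((P:ℕ):ℤ)+1 := by exact_mod_cast he
  -- the determinant-one positive form
  have hdet3 : det3 (m:ℤ) (e:ℤ) g 1 0 f = 1 := by
    simp only [det3]
    linear_combination g * heZ + hPg
  have hP0 : (0:ℤ) < ((P:ℕ):ℤ) := by exact_mod_cast Nat.pos_of_ne_zero (by omega)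
  have hm0' : (0:ℤ) < (m:ℤ) := by exact_mod_cast (by omega : 0 < m)
  have hid : ∀ x y z : ℤ, ((P:ℕ):ℤ)*(m:ℤ)*q3 (m:ℤ) (e:ℤ) g 1 0 f x y z
      = ((P:ℕ):ℤ)*((m:ℤ)*x+y)^2 + (((P:ℕ):ℤ)*y + (m:ℤ)*f*z)^2 + (m:ℤ)*z^2 := by
    intro x y z
    simp only [q3]
    linear_combination (((P:ℕ):ℤ)*y^2) * heZ + ((m:ℤ)*z^2) * hPg
  have hpos3 : ∀ x y z : ℤ, ¬(x = 0 ∧ y = 0 ∧ z = 0) → 0 < q3 (m:ℤ) (e:ℤ) g 1 0 f x y z := by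
    intro x y z hxyz
    by_contra hle
    push_neg at hle
    have hsum : ((P:ℕ):ℤ)*((m:ℤ)*x+y)^2 + (((P:ℕ):ℤ)*y + (m:ℤ)*f*z)^2 + (m:ℤ)*z^2 ≤ 0 := by
      rw [← hid x y z]
      nlinarith [mul_pos hP0 hm0']
    have hz2 : z^2 ≤ 0 := by
      nlinarith [sq_nonneg ((m:ℤ)*x+y), sq_nonneg (((P:ℕ):ℤ)*y + (m:ℤ)*f*z), sq_nonneg z]
    have hz : z = 0 := by
      have := sq_nonneg z
      have hz0 : z^2 = 0 := le_antisymm hz2 this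
      exact pow_eq_zero_iff (by norm_num) |>.mp hz0
    subst hz
    have hy2 : (((P:ℕ):ℤ)*y)^2 ≤ 0 := by
      nlinarith [sq_nonneg ((m:ℤ)*x+y)]
    have hy : y = 0 := by
      have hy0 : (((P:ℕ):ℤ)*y)^2 = 0 := le_antisymm hy2 (sq_nonneg _)
      have hy1 : ((P:ℕ):ℤ)*y = 0 := pow_eq_zero_iff (by norm_num) |>.mp hy0
      rcases mul_eq_zero.mp hy1 with h | h
      · exact absurd h (by positivity)
      · exact h
    subst hy
    have hx2 : ((m:ℤ)*x)^2 ≤ 0 := by nlinarith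
    have hx : x = 0 := by
      have hx0 : ((m:ℤ)*x)^2 = 0 := le_antisymm hx2 (sq_nonneg _)
      have hx1 : (m:ℤ)*x = 0 := pow_eq_zero_iff (by norm_num) |>.mp hx0
      rcases mul_eq_zero.mp hx1 with h | h
      · exact absurd h (by positivity)
      · exact h
    exact hxyz ⟨hx, rfl, rfl⟩
  obtain ⟨s₁, s₂, s₃, hrep⟩ := tern_rep (m:ℤ) (e:ℤ) g 1 0 f hdet3 hpos3 1 0 0
  refine ⟨s₁, s₂, s₃, ?_⟩
  rw [← hrep]
  simp only [q3]
  ring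


lemma sqm3 (t : ℤ) : t^2 % 3 = if t % 3 = 0 then 0 else 1 := by
  have h : t^2 % 3 = (t % 3) * (t % 3) % 3 := by rw [pow_two]; exact Int.mul_emod t t 3
  have h3 : t % 3 = 0 ∨ t % 3 = 1 ∨ t % 3 = 2 := by omega
  rcases h3 with h'|h'|h' <;> rw [h'] at h <;> norm_num at h <;> simp [h', h]

lemma sqm4 (t : ℤ) : t^2 % 4 = if t % 2 = 0 then 0 else 1 := by
  have h : t^2 % 4 = (t % 4) * (t % 4) % 4 := by rw [pow_two]; exact Int.mul_emod t t 4
  have h24 : t % 2 = (t % 4) % 2 := (Int.emod_emod_of_dvd t (by norm_num)).symm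
  have h4 : t % 4 = 0 ∨ t % 4 = 1 ∨ t % 4 = 2 ∨ t % 4 = 3 := by omega
  rcases h4 with h'|h'|h'|h' <;> rw [h'] at h <;> norm_num at h <;>
    rw [h'] at h24 <;> norm_num at h24 <;> simp [h24, h]

lemma pattern3 (M x y z : ℤ) (hrep : M = x^2 + y^2 + z^2) (h3 : M % 3 = 2) :
    (x % 3 = 0 ∧ y % 3 ≠ 0 ∧ z % 3 ≠ 0) ∨ (y % 3 = 0 ∧ x % 3 ≠ 0 ∧ z % 3 ≠ 0) ∨
    (z % 3 = 0 ∧ x % 3 ≠ 0 ∧ y % 3 ≠ 0) := by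
  have hx := sqm3 x
  have hy := sqm3 y
  have hz := sqm3 z
  by_cases hx0 : x % 3 = 0 <;> by_cases hy0 : y % 3 = 0 <;> by_cases hz0 : z % 3 = 0 <;>
    simp [hx0, hy0, hz0] at hx hy hz <;> omega

lemma pattern4 (M x y z : ℤ) (hrep : M = x^2 + y^2 + z^2) (h4 : M % 4 = 1) :
    (x % 2 = 1 ∧ y % 2 = 0 ∧ z % 2 = 0) ∨ (y % 2 = 1 ∧ x % 2 = 0 ∧ z % 2 = 0) ∨
    (z % 2 = 1 ∧ x % 2 = 0 ∧ y % 2 = 0) := by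
  have hx := sqm4 x
  have hy := sqm4 y
  have hz := sqm4 z
  by_cases hx0 : x % 2 = 0 <;> by_cases hy0 : y % 2 = 0 <;> by_cases hz0 : z % 2 = 0 <;>
    simp [hx0, hy0, hz0] at hx hy hz <;> omega

lemma step (M a b d : ℤ) (hrep : M = a^2 + b^2 + 9*d^2) (hab : a % 3 = b % 3)
    (ha2 : a % 2 = 0) (hb2 : b % 2 = 0) (hd2 : d % 2 = 1) :
    ∃ A B C : ℤ, M = A^2 + B^2 + C^2 ∧ A % 2 = 0 ∧ B % 2 = 0 ∧ C % 2 = 1 ∧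
      3*C = 2*a - 2*b + 3*d := by
  obtain ⟨A, hA⟩ : (3:ℤ) ∣ a + 2*b + 6*d := by omega
  obtain ⟨B, hB⟩ : (3:ℤ) ∣ 2*a + b - 6*d := by omega
  obtain ⟨C, hC⟩ : (3:ℤ) ∣ 2*a - 2*b + 3*d := by omega
  have h9 : (9:ℤ) * (A^2+B^2+C^2) = 9 * (a^2 + b^2 + 9*d^2) := by
    linear_combination (-((a+2*b+6*d) + 3*A)) * hA + (-((2*a+b-6*d) + 3*B)) * hB
      + (-((2*a-2*b+3*d) + 3*C)) * hC
  refine ⟨A, B, C, by linarith [hrep, h9], by omega, by omega, by omega, by omega⟩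

lemma neg_mod6_one (U : ℤ) (h2 : U % 2 = 1) (h3 : U % 3 ≠ 0) (h : ¬ U % 6 = 1) :
    -U % 6 = 1 := by
  have e2 : U % 6 % 2 = U % 2 := Int.emod_emod_of_dvd U (by norm_num)
  have e3 : U % 6 % 3 = U % 3 := Int.emod_emod_of_dvd U (by norm_num)
  have h5 : U % 6 = 5 := by omega
  have hq := Int.mul_ediv_add_emod U 6
  have : -U = 6*(-(U/6) - 1) + 1 := by omega
  omega

lemma neg_mod6_two (V : ℤ) (h2 : V % 2 = 0) (h3 : V % 3 ≠ 0) (h : ¬ V % 6 = 2) :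
    -V % 6 = 2 := by
  have e2 : V % 6 % 2 = V % 2 := Int.emod_emod_of_dvd V (by norm_num)
  have e3 : V % 6 % 3 = V % 3 := Int.emod_emod_of_dvd V (by norm_num)
  have h5 : V % 6 = 4 := by omega
  have hq := Int.mul_ediv_add_emod V 6
  have : -V = 6*(-(V/6) - 1) + 2 := by omega
  omega

lemma neg_mod3 (b : ℤ) (h3 : b % 3 ≠ 0) : -b % 3 ≠ 0 := by
  have hq := Int.mul_ediv_add_emod b 3
  have h01 : b % 3 = 1 ∨ b % 3 = 2 := by omega
  rcases h01 with h|h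
  · have : -b = 3*(-(b/3) - 1) + 2 := by omega
    omega
  · have : -b = 3*(-(b/3) - 1) + 1 := by omega
    omega

lemma neg_mod3_eq (a b : ℤ) (ha : a % 3 ≠ 0) (hb : b % 3 ≠ 0) (h : ¬ a % 3 = b % 3) :
    a % 3 = -b % 3 := by omega

lemma descent (M : ℤ) (hM3 : M % 3 = 2) :
    ∀ j : ℕ, ∀ a b d : ℤ, M = a^2 + b^2 + 9*d^2 → a % 2 = 0 → b % 2 = 0 → d % 2 = 1 →
    a % 3 ≠ 0 → b % 3 ≠ 0 → ¬((3:ℤ)^j ∣ d) → ∃ u v w : ℤ, M = u^2 + v^2 + 36*w^2 := by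
  intro j
  induction j with
  | zero => intro a b d _ _ _ _ _ _ hnd; exact absurd (by simpa using one_dvd d) hnd
  | succ j ih =>
    intro a b d hrep ha2 hb2 hd2 ha3 hb3 hnd
    -- WLOG a ≡ b (mod 3)
    obtain ⟨b', hb'2, hb'3, hab, hb'sq⟩ :
        ∃ b' : ℤ, b' % 2 = 0 ∧ b' % 3 ≠ 0 ∧ a % 3 = b' % 3 ∧ b'^2 = b^2 := by
      by_cases h : a % 3 = b % 3
      · exact ⟨b, hb2, hb3, h, rfl⟩
      · exact ⟨-b, by omega, neg_mod3 b hb3, neg_mod3_eq a b ha3 hb3 h, by ring⟩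
    have hrep' : M = a^2 + b'^2 + 9*d^2 := by rw [hrep, hb'sq]
    obtain ⟨A₁, B₁, C₁, hr1, hA₁2, hB₁2, hC₁2, hC₁⟩ := step M a b' d hrep' hab ha2 hb'2 hd2
    obtain ⟨A₂, B₂, C₂, hr2, hA₂2, hB₂2, hC₂2, hC₂⟩ :=
      step M a b' (-d) (by rw [show (-d)^2 = d^2 by ring]; exact hrep') hab ha2 hb'2 (by omega)
    have good : ∀ A B C : ℤ, M = A^2 + B^2 + C^2 → A % 3 = 0 → A % 2 = 0 →
        ∃ u v w : ℤ, M = u^2 + v^2 + 36*w^2 := by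
      intro A B C hr h3 h2
      obtain ⟨w, hw⟩ : (6:ℤ) ∣ A := by omega
      exact ⟨B, C, w, by rw [hr, hw]; ring⟩
    rcases pattern3 M A₁ B₁ C₁ hr1 hM3 with ⟨h,h'⟩|⟨h,h'⟩|⟨h1,hA₁3,hB₁3⟩
    · exact good A₁ B₁ C₁ hr1 h hA₁2
    · exact good B₁ A₁ C₁ (by linarith [hr1]) h hB₁2
    rcases pattern3 M A₂ B₂ C₂ hr2 hM3 with ⟨h,h'⟩|⟨h,h'⟩|⟨h2,hA₂3,hB₂3⟩
    · exact good A₂ B₂ C₂ hr2 h hA₂2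
    · exact good B₂ A₂ C₂ (by linarith [hr2]) h hB₂2
    -- both bad: descend
    obtain ⟨d₁, hd₁⟩ : (3:ℤ) ∣ C₁ := by omega
    obtain ⟨d₂, hd₂⟩ : (3:ℤ) ∣ C₂ := by omega
    have hdiff : 3*(d₁ - d₂) = 2*d := by omega
    have hkey : ¬((3:ℤ)^j ∣ d₁) ∨ ¬((3:ℤ)^j ∣ d₂) := by
      by_contra hcon
      push_neg at hcon
      obtain ⟨⟨k₁, hk₁⟩, ⟨k₂, hk₂⟩⟩ := hcon
      have h2d : 2*d = 3^(j+1) * (k₁ - k₂) := by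
        rw [hk₁, hk₂] at hdiff
        linear_combination -hdiff
      have hodd : Odd ((3:ℤ)^(j+1)) := Odd.pow (by decide)
      have h2dvd : (2:ℤ) ∣ 3^(j+1) * (k₁ - k₂) := ⟨d, by linarith⟩
      rcases (Int.Prime.dvd_mul' Nat.prime_two (by exact_mod_cast h2dvd)) with hh | hh
      · rw [Int.odd_iff] at hodd
        have hh2 : (2:ℤ) ∣ 3^(j+1) := by exact_mod_cast hh
        omega
      · have hh2 : (2:ℤ) ∣ (k₁ - k₂) := by exact_mod_cast hh
        obtain ⟨k', hk'⟩ := hh2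
        apply hnd
        refine ⟨k', ?_⟩
        have h3' : 2*d = 3^(j+1)*(2*k') := by rw [hk'] at h2d; exact h2d
        linarith [h3']
    have hd₁2 : d₁ % 2 = 1 := by omega
    have hd₂2 : d₂ % 2 = 1 := by omega
    have hrep₁ : M = A₁^2 + B₁^2 + 9*d₁^2 := by rw [hr1, hd₁]; ring
    have hrep₂ : M = A₂^2 + B₂^2 + 9*d₂^2 := by rw [hr2, hd₂]; ring
    rcases hkey with hk | hk
    · exact ih A₁ B₁ d₁ hrep₁ hA₁2 hB₁2 hd₁2 hA₁3 hB₁3 hk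
    · exact ih A₂ B₂ d₂ hrep₂ hA₂2 hB₂2 hd₂2 hA₂3 hB₂3 hk

lemma to36 (M : ℤ) (h12 : M % 12 = 5) (x y z : ℤ) (hrep : M = x^2+y^2+z^2) :
    ∃ u v w : ℤ, M = u^2 + v^2 + 36*w^2 := by
  have hM3 : M % 3 = 2 := by omega
  have hM4 : M % 4 = 1 := by omega
  have main : ∀ a b c : ℤ, M = a^2+b^2+c^2 → c % 3 = 0 → a % 3 ≠ 0 → b % 3 ≠ 0 →
      ∃ u v w : ℤ, M = u^2 + v^2 + 36*w^2 := by
    intro a b c hr hc3 ha3 hb3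
    rcases pattern4 M a b c hr hM4 with ⟨h1,h2,h3⟩|⟨h1,h2,h3⟩|⟨h1,h2,h3⟩
    · obtain ⟨w, hw⟩ : (6:ℤ) ∣ c := by omega
      exact ⟨a, b, w, by rw [hr, hw]; ring⟩
    · obtain ⟨w, hw⟩ : (6:ℤ) ∣ c := by omega
      exact ⟨a, b, w, by rw [hr, hw]; ring⟩
    · obtain ⟨d, hd⟩ : (3:ℤ) ∣ c := by omega
      have hd2 : d % 2 = 1 := by omega
      have hdne : d ≠ 0 := by omega
      have hJgt : (d.natAbs : ℤ) < (3:ℤ)^(d.natAbs) := by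
        have h1 : d.natAbs < 3^(d.natAbs) := Nat.lt_pow_self (by norm_num)
        exact_mod_cast h1
      have hnd : ¬((3:ℤ)^(d.natAbs) ∣ d) := by
        intro hdvd
        have h2 : (3:ℤ)^(d.natAbs) ∣ (d.natAbs : ℤ) := Int.dvd_natAbs.mpr hdvd
        have h3 : (3:ℤ)^(d.natAbs) ≤ (d.natAbs : ℤ) := Int.le_of_dvd
          (by exact_mod_cast Nat.pos_of_ne_zero (fun h => hdne (Int.natAbs_eq_zero.mp h))) h2
        linarith
      exact descent M hM3 d.natAbs a b d (by rw [hr, hd]; ring) h2 h3 hd2 ha3 hb3 hnd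
  rcases pattern3 M x y z hrep hM3 with ⟨h1,h2,h3⟩|⟨h1,h2,h3⟩|⟨h1,h2,h3⟩
  · exact main y z x (by linarith [hrep]) h1 h2 h3
  · exact main x z y (by linarith [hrep]) h1 h2 h3
  · exact main x y z hrep h1 h2 h3

end Stmt17

theorem stmt_17 (n : ℕ) : ∃ x y z : ℤ, (n : ℤ) = 3*x^2 + y*(3*y+1) + z*(3*z+2) := by
  obtain ⟨a, b, c, hrep⟩ := Stmt17.three_squares (12*n+5) (by omega)
  have hcast : ((12*n+5 : ℕ) : ℤ) = 12*(n:ℤ)+5 := by push_cast; ring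
  rw [hcast] at hrep
  obtain ⟨u, v, w, h36⟩ := Stmt17.to36 (12*(n:ℤ)+5) (by omega) a b c hrep
  have hu3 := Stmt17.sqm3 u
  have hv3 := Stmt17.sqm3 v
  have hu4 := Stmt17.sqm4 u
  have hv4 := Stmt17.sqm4 v
  have hw4 : (4:ℤ) ∣ 36*w^2 := ⟨9*w^2, by ring⟩
  have hw3 : (3:ℤ) ∣ 36*w^2 := ⟨12*w^2, by ring⟩
  have hKey : (u%3 ≠ 0) ∧ (v%3 ≠ 0) ∧ ((u%2=1 ∧ v%2=0) ∨ (u%2=0 ∧ v%2=1)) := by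
    by_cases h1 : u % 3 = 0 <;> by_cases h2 : v % 3 = 0 <;>
      by_cases h3 : u % 2 = 0 <;> by_cases h4 : v % 2 = 0 <;>
      simp only [h1, h2, h3, h4, if_true, if_false, if_pos, if_neg] at hu3 hv3 hu4 hv4 <;>
      omega
  obtain ⟨U, V, hU2, hV2, hU3, hV3, hUV⟩ :
      ∃ U V : ℤ, U%2 = 1 ∧ V%2 = 0 ∧ U%3 ≠ 0 ∧ V%3 ≠ 0 ∧ U^2+V^2 = u^2+v^2 := by
    rcases hKey with ⟨hu, hv, hpar|hpar⟩
    · exact ⟨u, v, hpar.1, hpar.2, hu, hv, rfl⟩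
    · exact ⟨v, u, hpar.2, hpar.1, hv, hu, by ring⟩
  obtain ⟨U', hU'1, hU'sq⟩ : ∃ U' : ℤ, U' % 6 = 1 ∧ U'^2 = U^2 := by
    by_cases h : U % 6 = 1
    · exact ⟨U, h, rfl⟩
    · exact ⟨-U, Stmt17.neg_mod6_one U hU2 hU3 h, by ring⟩
  obtain ⟨V', hV'2, hV'sq⟩ : ∃ V' : ℤ, V' % 6 = 2 ∧ V'^2 = V^2 := by
    by_cases h : V % 6 = 2
    · exact ⟨V, h, rfl⟩
    · exact ⟨-V, Stmt17.neg_mod6_two V hV2 hV3 h, by ring⟩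
  obtain ⟨y, hy⟩ : (6:ℤ) ∣ (U' - 1) := by omega
  obtain ⟨z, hz⟩ : (6:ℤ) ∣ (V' - 2) := by omega
  refine ⟨w, y, z, ?_⟩
  have h1 : U' = 6*y+1 := by omega
  have h2 : V' = 6*z+2 := by omega
  have hfin : 12*(n:ℤ)+5 = (6*y+1)^2 + (6*z+2)^2 + 36*w^2 := by
    calc 12*(n:ℤ)+5 = u^2+v^2+36*w^2 := h36
    _ = U^2+V^2+36*w^2 := by rw [hUV]
    _ = U'^2+V'^2+36*w^2 := by rw [hU'sq, hV'sq]
    _ = (6*y+1)^2+(6*z+2)^2+36*w^2 := by rw [h1, h2]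
  linarith [hfin]
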